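/- Let λ, μ, α > 0 and let φ satisfy φ(T)/T → ∞ as T → ∞. Then for every x > 0, liminf_{T→∞} (1/(φ(T)·ln(φ(T)/T))) ln P(ξ_T(1) ≥ x) ≥ −x. -/

import Mathlib

open MeasureTheory ProbabilityTheory Filter Set
open scoped ENNReal Topology

noncomputable section

/-- Transition probabilities of the embedded Markov chain of the Poisson process with
uniform catastrophes: from `i ≥ 1`, go to `i+1` with probability `λ/(λ+μ)` and to each
`j < i` with probability `μ/(i(λ+μ))`; from `0`, go to `1` with probability `1`. -/
def transP (lam mu : ℝ) (i j : ℕ) : ℝ :=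
  if i = 0 then (if j = 1 then 1 else 0)
  else if j = i + 1 then lam / (lam + mu)
  else if j < i then mu / (i * (lam + mu))
  else 0

/-- `η` is (distributed as) the discrete-time Markov chain on `ℕ` started at `x` with
transition probabilities `transP lam mu`, under the probability measure `P`:
the finite-dimensional distributions are products of transition probabilities. -/
def IsMarkovChainFrom {Ω : Type*} [MeasurableSpace Ω] (P : Measure Ω)
    (lam mu : ℝ) (x : ℕ) (η : ℕ → Ω → ℕ) : Prop :=
  (∀ k, Measurable (η k)) ∧
  ∀ (n : ℕ) (path : ℕ → ℕ),
    P {ω | ∀ l ≤ n, η l ω = path l} =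
      (if path 0 = x then 1 else 0) *
        ∏ l ∈ Finset.range n, ENNReal.ofReal (transP lam mu (path l) (path (l + 1)))

/-- `ν` is a Poisson process of rate `α` under `P`: it starts at `0`, has monotone paths
on `[0,∞)`, independent increments, and each increment over `[s,t]` is Poisson
distributed with mean `α(t-s)`. -/
def IsPoissonProcess {Ω : Type*} [MeasurableSpace Ω] (P : Measure Ω)
    (α : ℝ) (ν : ℝ → Ω → ℕ) : Prop :=
  (∀ t, Measurable (ν t)) ∧
  (∀ ω, ν 0 ω = 0) ∧
  (∀ ω, MonotoneOn (fun t => ν t ω) (Set.Ici (0 : ℝ))) ∧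
  (∀ (n : ℕ) (t : ℕ → ℝ), 0 ≤ t 0 → Monotone t →
    iIndepFun
      (fun i : Fin n => fun ω => ν (t (i + 1)) ω - ν (t i) ω) P) ∧
  (∀ s t : ℝ, 0 ≤ s → s ≤ t → ∀ k : ℕ,
    P {ω | ν t ω - ν s ω = k} =
      ENNReal.ofReal (Real.exp (-(α * (t - s))) * (α * (t - s)) ^ k / (Nat.factorial k)))

/-- The processes `η` and `ν` are independent (as processes). -/
def IndepProc {Ω : Type*} [MeasurableSpace Ω] (P : Measure Ω)
    (η : ℕ → Ω → ℕ) (ν : ℝ → Ω → ℕ) : Prop :=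
  IndepFun (fun ω => fun k => η k ω) (fun ω => fun t => ν t ω) P

/-- Auxiliary explicit lower bound function used in the proof of the lower bound. -/
def lowerFun (alpha q x : ℝ) (φ : ℝ → ℝ) (T : ℝ) : ℝ :=
  (φ T * Real.log (φ T / T))⁻¹ *
    ((⌈x * φ T⌉₊ : ℝ) * Real.log q - alpha * T + (⌈x * φ T⌉₊ : ℝ) * Real.log (alpha * T)
      - (⌈x * φ T⌉₊ : ℝ) * Real.log (⌈x * φ T⌉₊ : ℝ))

lemma lowerFun_tendsto (alpha q x : ℝ) (halpha : 0 < alpha) (hq0 : 0 < q) (hx : 0 < x)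
    (φ : ℝ → ℝ) (hφpos : ∀ T > (0:ℝ), 0 < φ T)
    (hφ : Tendsto (fun T => φ T / T) atTop atTop) :
    Tendsto (lowerFun alpha q x φ) atTop (𝓝 (-x)) := by
  have hφtop : Tendsto φ atTop atTop := by
    refine tendsto_atTop_mono' atTop ?_ hφ
    filter_upwards [eventually_ge_atTop (1:ℝ)] with T hT1
    exact div_le_self (hφpos T (by linarith)).le hT1
  set u : ℝ → ℝ := fun T => (⌈x * φ T⌉₊ : ℝ) / φ T with hudef
  set L : ℝ → ℝ := fun T => Real.log (φ T / T) with hLdef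
  have hev : ∀ᶠ T in atTop, 0 < T ∧ 0 < φ T ∧ 1 < φ T / T ∧ 0 < ⌈x * φ T⌉₊ := by
    filter_upwards [eventually_gt_atTop (0:ℝ), hφ.eventually_gt_atTop 1] with T h1 h2
    exact ⟨h1, hφpos T h1, h2, Nat.ceil_pos.2 (mul_pos hx (hφpos T h1))⟩
  -- u tends to x
  have tu : Tendsto u atTop (𝓝 x) := by
    have hub : Tendsto (fun T => x + (φ T)⁻¹) atTop (𝓝 x) := by
      simpa using tendsto_const_nhds.add hφtop.inv_tendsto_atTop
    refine tendsto_of_tendsto_of_tendsto_of_le_of_le' tendsto_const_nhds hub ?_ ?_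
    · filter_upwards [hev] with T hT
      rw [hudef]
      rw [le_div_iff₀ hT.2.1]
      exact Nat.le_ceil _
    · filter_upwards [hev] with T hT
      rw [hudef]
      rw [div_le_iff₀ hT.2.1]
      have h1 : (⌈x * φ T⌉₊ : ℝ) ≤ x * φ T + 1 := (Nat.ceil_lt_add_one (mul_pos hx hT.2.1).le).le
      have h2 : (x + (φ T)⁻¹) * φ T = x * φ T + 1 := by
        rw [add_mul, inv_mul_cancel₀ hT.2.1.ne']
      linarith
  have tL : Tendsto L atTop atTop := Real.tendsto_log_atTop.comp hφ
  have tlnu : Tendsto (fun T => Real.log (u T)) atTop (𝓝 (Real.log x)) :=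
    (Real.continuousAt_log hx.ne').tendsto.comp tu
  have t1 : Tendsto (fun T => (Real.log (u T) - Real.log alpha - Real.log q) / L T) atTop (𝓝 0) :=
    Tendsto.div_atTop ((tlnu.sub_const _).sub_const _) tL
  have t2 : Tendsto (fun T => u T * (1 + (Real.log (u T) - Real.log alpha - Real.log q) / L T))
      atTop (𝓝 x) := by
    have h' : Tendsto (fun T => 1 + (Real.log (u T) - Real.log alpha - Real.log q) / L T)
        atTop (𝓝 (1 + 0)) := tendsto_const_nhds.add t1
    simpa using tu.mul h'
  have hTφ : Tendsto (fun T => T / φ T) atTop (𝓝 0) := by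
    apply hφ.inv_tendsto_atTop.congr'
    filter_upwards [eventually_gt_atTop (0:ℝ)] with T hT
    exact inv_div (φ T) T
  have t3 : Tendsto (fun T => alpha * (T / φ T) / L T) atTop (𝓝 0) := by
    have h' : Tendsto (fun T => alpha * (T / φ T)) atTop (𝓝 (alpha * 0)) :=
      tendsto_const_nhds.mul hTφ
    have := h'.mul tL.inv_tendsto_atTop
    simpa [div_eq_mul_inv, mul_assoc] using this
  have tmain : Tendsto (fun T =>
      -(u T * (1 + (Real.log (u T) - Real.log alpha - Real.log q) / L T))
        - alpha * (T / φ T) / L T) atTop (𝓝 (-x)) := by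
    simpa using t2.neg.sub t3
  refine tmain.congr' ?_
  filter_upwards [hev] with T hT
  obtain ⟨h1, h2, h3, h4⟩ := hT
  have hL : 0 < L T := Real.log_pos h3
  have hnpos : (0:ℝ) < (⌈x * φ T⌉₊ : ℝ) := by exact_mod_cast h4
  unfold lowerFun
  rw [hudef, hLdef] at *
  simp only
  rw [Real.log_div hnpos.ne' h2.ne', Real.log_div h2.ne' h1.ne', Real.log_mul halpha.ne' h1.ne']
  have hD : Real.log (φ T) - Real.log T ≠ 0 := by
    rw [← Real.log_div h2.ne' h1.ne']; exact hL.ne'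
  field_simp
  ring

lemma measure_key {Ω : Type*} [MeasurableSpace Ω] (P : Measure Ω) [IsProbabilityMeasure P]
    (lam mu alpha : ℝ) (hlam : 0 < lam) (hmu : 0 < mu)
    (η : ℕ → Ω → ℕ) (ν : ℝ → Ω → ℕ)
    (hη : IsMarkovChainFrom P lam mu 0 η)
    (hν : IsPoissonProcess P alpha ν)
    (hind : IndepProc P η ν)
    (x : ℝ) (T : ℝ) (hT : 0 < T) (φT : ℝ) (hφT : 0 < φT) :
    ENNReal.ofReal ((lam / (lam + mu)) ^ ⌈x * φT⌉₊ *
        (Real.exp (-(alpha * T)) * (alpha * T) ^ ⌈x * φT⌉₊ / (Nat.factorial ⌈x * φT⌉₊))) ≤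
      P {ω | x ≤ (η (ν T ω) ω : ℝ) / φT} := by
  have hlm : (0:ℝ) < lam + mu := by linarith
  have hq0 : 0 < lam / (lam + mu) := div_pos hlam hlm
  have hq1 : lam / (lam + mu) ≤ 1 := by rw [div_le_one hlm]; linarith
  set N := ⌈x * φT⌉₊ with hN
  set A := {ω : Ω | ∀ l ≤ N, η l ω = l} with hA
  set B := {ω : Ω | ν T ω = N} with hB
  have hsub : A ∩ B ⊆ {ω | x ≤ (η (ν T ω) ω : ℝ) / φT} := by
    rintro ω ⟨hA', hB'⟩
    simp only [Set.mem_setOf_eq] at *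
    rw [hB', hA' N le_rfl, le_div_iff₀ hφT]
    exact Nat.le_ceil _
  have hmulAB : P (A ∩ B) = P A * P B := by
    have hSA : MeasurableSet {f : ℕ → ℕ | ∀ l ≤ N, f l = l} := by
      have : {f : ℕ → ℕ | ∀ l ≤ N, f l = l}
          = ⋂ l ∈ Set.Iic N, (fun f : ℕ → ℕ => f l) ⁻¹' {l} := by
        ext f; simp [Set.mem_iInter]
      rw [this]
      exact MeasurableSet.biInter (Set.to_countable _)
        (fun l _ => (measurable_pi_apply l) (measurableSet_singleton l))
    have hSB : MeasurableSet ((fun g : ℝ → ℕ => g T) ⁻¹' {N}) :=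
      (measurable_pi_apply T) (measurableSet_singleton N)
    exact hind.measure_inter_preimage_eq_mul _ _ hSA hSB
  have htrans : ∀ l : ℕ, lam / (lam + mu) ≤ transP lam mu l (l + 1) := by
    intro l
    unfold transP
    rcases eq_or_ne l 0 with h | h
    · subst h; norm_num [hq1]
    · simp [h]
  have hPA : ENNReal.ofReal ((lam / (lam + mu)) ^ N) ≤ P A := by
    have h := hη.2 N (fun l => l)
    simp only [eq_self_iff_true, if_true, one_mul] at h
    calc ENNReal.ofReal ((lam / (lam + mu)) ^ N)
        = ∏ _l ∈ Finset.range N, ENNReal.ofReal (lam / (lam + mu)) := by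
          rw [Finset.prod_const, Finset.card_range, ← ENNReal.ofReal_pow hq0.le]
      _ ≤ ∏ l ∈ Finset.range N, ENNReal.ofReal (transP lam mu l (l + 1)) :=
          Finset.prod_le_prod' (fun l _ => ENNReal.ofReal_le_ofReal (htrans l))
      _ = P A := h.symm
  have hPB : P B = ENNReal.ofReal
      (Real.exp (-(alpha * T)) * (alpha * T) ^ N / (Nat.factorial N)) := by
    have h := hν.2.2.2.2 0 T le_rfl hT.le N
    have hset : {ω : Ω | ν T ω - ν 0 ω = N} = B := by
      ext ω; simp [hν.2.1 ω, hB]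
    rw [hset] at h
    simpa using h
  calc ENNReal.ofReal ((lam / (lam + mu)) ^ N *
          (Real.exp (-(alpha * T)) * (alpha * T) ^ N / (Nat.factorial N)))
      = ENNReal.ofReal ((lam / (lam + mu)) ^ N) * ENNReal.ofReal
          (Real.exp (-(alpha * T)) * (alpha * T) ^ N / (Nat.factorial N)) :=
        ENNReal.ofReal_mul (by positivity)
    _ ≤ P A * P B := mul_le_mul' hPA hPB.ge
    _ = P (A ∩ B) := hmulAB.symm
    _ ≤ P {ω | x ≤ (η (ν T ω) ω : ℝ) / φT} := measure_mono hsub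

/-- **Lower bound in the superlinear regime.** If `φ(T)/T → ∞`, then for every `x > 0`,
`liminf_{T→∞} (1/(φ(T) ln(φ(T)/T))) ln P(ξ(T)/φ(T) ≥ x) ≥ -x`. -/
theorem sldp_lower_bound_poisson_uniform_catastrophes
    {Ω : Type*} [MeasurableSpace Ω] (P : Measure Ω) [IsProbabilityMeasure P]
    (lam mu alpha : ℝ) (hlam : 0 < lam) (hmu : 0 < mu) (halpha : 0 < alpha)
    (η : ℕ → Ω → ℕ) (ν : ℝ → Ω → ℕ)
    (hη : IsMarkovChainFrom P lam mu 0 η)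
    (hν : IsPoissonProcess P alpha ν)
    (hind : IndepProc P η ν)
    (φ : ℝ → ℝ) (hφpos : ∀ T > (0 : ℝ), 0 < φ T)
    (hφ : Tendsto (fun T => φ T / T) atTop atTop)
    (x : ℝ) (hx : 0 < x) :
    ((-x : ℝ) : EReal) ≤
      Filter.liminf
        (fun T => (((φ T * Real.log (φ T / T))⁻¹ : ℝ) : EReal) *
          ENNReal.log (P {ω | x ≤ (η (ν T ω) ω : ℝ) / φ T}))
        atTop := by
  have hlm : (0:ℝ) < lam + mu := by linarith
  have hq0 : 0 < lam / (lam + mu) := div_pos hlam hlm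
  have stepA := lowerFun_tendsto alpha (lam / (lam + mu)) x halpha hq0 hx φ hφpos hφ
  have stepB : ∀ᶠ T in atTop,
      ((lowerFun alpha (lam / (lam + mu)) x φ T : ℝ) : EReal) ≤
        (((φ T * Real.log (φ T / T))⁻¹ : ℝ) : EReal) *
          ENNReal.log (P {ω | x ≤ (η (ν T ω) ω : ℝ) / φ T}) := by
    filter_upwards [eventually_gt_atTop (0:ℝ), hφ.eventually_gt_atTop 1] with T hT hratio
    have hφT : 0 < φ T := hφpos T hT
    have hL : 0 < Real.log (φ T / T) := Real.log_pos hratio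
    set N := ⌈x * φ T⌉₊ with hNdef
    have hNpos : 0 < N := Nat.ceil_pos.2 (mul_pos hx hφT)
    have hNr : (0:ℝ) < (N:ℝ) := by exact_mod_cast hNpos
    have hαT : 0 < alpha * T := mul_pos halpha hT
    have hb : 0 < (lam / (lam + mu)) ^ N *
        (Real.exp (-(alpha * T)) * (alpha * T) ^ N / (Nat.factorial N)) := by positivity
    have hkey := measure_key P lam mu alpha hlam hmu η ν hη hν hind x T hT (φ T) hφT
    have hP0 : P {ω | x ≤ (η (ν T ω) ω : ℝ) / φ T} ≠ 0 :=
      ((ENNReal.ofReal_pos.mpr hb).trans_le hkey).ne'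
    have hPtop : P {ω | x ≤ (η (ν T ω) ω : ℝ) / φ T} ≠ ⊤ := measure_ne_top _ _
    rw [ENNReal.log_pos_real hP0 hPtop, ← EReal.coe_mul, EReal.coe_le_coe_iff]
    have hble : (lam / (lam + mu)) ^ N *
        (Real.exp (-(alpha * T)) * (alpha * T) ^ N / (Nat.factorial N)) ≤
          (P {ω | x ≤ (η (ν T ω) ω : ℝ) / φ T}).toReal := by
      have h2 := ENNReal.toReal_mono hPtop hkey
      rwa [ENNReal.toReal_ofReal hb.le] at h2
    have hlog1 := Real.log_le_log hb hble
    have hfac : (Nat.factorial N : ℝ) ≠ 0 := by positivity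
    have hlogb : Real.log ((lam / (lam + mu)) ^ N *
          (Real.exp (-(alpha * T)) * (alpha * T) ^ N / (Nat.factorial N)))
        = (N:ℝ) * Real.log (lam / (lam + mu)) +
            (-(alpha * T) + (N:ℝ) * Real.log (alpha * T) - Real.log (Nat.factorial N)) := by
      rw [Real.log_mul (pow_ne_zero _ hq0.ne') (by positivity),
          Real.log_div (by positivity) hfac,
          Real.log_mul (Real.exp_ne_zero _) (by positivity),
          Real.log_exp, Real.log_pow, Real.log_pow]
    have hfactle : Real.log (Nat.factorial N : ℝ) ≤ (N:ℝ) * Real.log N := by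
      calc Real.log (Nat.factorial N : ℝ) ≤ Real.log ((N:ℝ) ^ N) := by
            apply Real.log_le_log (by positivity)
            exact_mod_cast Nat.factorial_le_pow N
        _ = (N:ℝ) * Real.log N := by rw [Real.log_pow]
    unfold lowerFun
    rw [← hNdef]
    apply mul_le_mul_of_nonneg_left ?_ (inv_nonneg.2 (mul_pos hφT hL).le)
    linarith [hlog1, hlogb, hfactle]
  have coeA : Tendsto (fun T => ((lowerFun alpha (lam / (lam + mu)) x φ T : ℝ) : EReal))
      atTop (𝓝 ((-x : ℝ) : EReal)) := EReal.tendsto_coe.2 stepA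
  calc ((-x : ℝ) : EReal)
      = Filter.liminf (fun T => ((lowerFun alpha (lam / (lam + mu)) x φ T : ℝ) : EReal)) atTop :=
        coeA.liminf_eq.symm
    _ ≤ _ := liminf_le_liminf stepB
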